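/- Let n ≥ 5 and t ∈ {2, 3}, let R_(n,t) be the (n,t)-regular graph of order n (in which every vertex has degree n − t), and let c be a locating rainbow r-coloring of R_(n,t) with r ≥ 3. Then every color is used on at most 1 + Σ_{k=1}^{t−1} C(r−1, t−k) vertices, where C(a,b) denotes the binomial coefficient. -/

import Mathlib

namespace LocatingRainbow

open SimpleGraph

variable {V : Type*}

/-- The internal vertices of a walk: its support without the endpoints. -/
def internalVertices {G : SimpleGraph V} {u v : V} (p : G.Walk u v) : List V :=
  p.support.tail.dropLast

/-- `c` is a rainbow vertex coloring of `G` (with colors in `Fin k`) if any two distinct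
vertices are joined by a path whose internal vertices have pairwise distinct colors. -/
def IsRainbowVertexColoring (G : SimpleGraph V) {k : ℕ} (c : V → Fin k) : Prop :=
  ∀ u v : V, u ≠ v → ∃ p : G.Walk u v, p.IsPath ∧ ((internalVertices p).map c).Nodup

/-- The distance from a vertex `v` to the color class of the color `i`. -/
noncomputable def distToColor (G : SimpleGraph V) {k : ℕ} (c : V → Fin k) (v : V) (i : Fin k) :
    ℕ :=
  sInf {m | ∃ y, c y = i ∧ G.dist v y = m}

/-- The rainbow code of a vertex `v`: the vector of distances to all color classes. -/
noncomputable def rainbowCode (G : SimpleGraph V) {k : ℕ} (c : V → Fin k) (v : V) :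
    Fin k → ℕ :=
  fun i => distToColor G c v i

/-- `c` is a locating rainbow coloring if it is a rainbow vertex coloring and distinct
vertices have distinct rainbow codes. -/
def IsLocatingRainbowColoring (G : SimpleGraph V) {k : ℕ} (c : V → Fin k) : Prop :=
  IsRainbowVertexColoring G c ∧ Function.Injective (rainbowCode G c)

/-- The rainbow vertex connection number of `G`. -/
noncomputable def rvc (G : SimpleGraph V) : ℕ :=
  sInf {k | ∃ c : V → Fin k, IsRainbowVertexColoring G c}

/-- The locating rainbow connection number of `G`. -/
noncomputable def rvcl (G : SimpleGraph V) : ℕ :=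
  sInf {k | ∃ c : V → Fin k, IsLocatingRainbowColoring G c}

end LocatingRainbow

namespace LocatingRainbow

open SimpleGraph

/-- The `(n,2)`-regular graph (for even `n`): the complete graph on `Fin n` with the
perfect matching `{vᵢ v_{i+n/2}}` (indices mod `n`) removed; every vertex has degree
`n - 2`. -/
def Rn2 (n : ℕ) : SimpleGraph (Fin n) where
  Adj i j := i ≠ j ∧ (i.val + n / 2) % n ≠ j.val ∧ (j.val + n / 2) % n ≠ i.val
  symm := ⟨fun _ _ ⟨h1, h2, h3⟩ => ⟨h1.symm, h3, h2⟩⟩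
  loopless := ⟨fun _ h => h.1 rfl⟩

/-- The `(n,3)`-regular graph: the complement of the cycle `C_n`, i.e. the complete graph
with the edges of a Hamiltonian cycle removed; every vertex has degree `n - 3`. -/
def Rn3 (n : ℕ) : SimpleGraph (Fin n) := (cycleGraph n)ᶜ

/-- The `(n,t)`-regular graph for `t ∈ {2, 3}`. -/
def Rnt (n t : ℕ) : SimpleGraph (Fin n) := if t = 2 then Rn2 n else Rn3 n

end LocatingRainbow


namespace LocatingRainbow
open SimpleGraph

variable {n t : ℕ}

attribute [local instance] Classical.propDecidable

lemma rnt_nonnbr_card (hn : 5 ≤ n) (ht : t = 2 ∨ t = 3) (hpar : t = 2 → Even n) (v : Fin n) :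
    (Finset.univ.filter (fun x => x ≠ v ∧ ¬ (Rnt n t).Adj v x)).card ≤ t - 1 := by
  classical
  rcases ht with ht | ht
  · subst ht
    obtain ⟨k, hk⟩ := hpar rfl
    have hh : n / 2 + n / 2 = n := by omega
    unfold Rnt
    rw [if_pos rfl]
    refine le_trans (Finset.card_le_card (t := {⟨(v.val + n / 2) % n, Nat.mod_lt _ (by omega)⟩}) ?_) (by simp)
    intro x hx
    rw [Finset.mem_filter] at hx
    simp only [Finset.mem_filter, Finset.mem_univ, true_and, Rn2, ne_eq] at hx
    obtain ⟨hne, hadj⟩ := hx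
    push_neg at hadj
    have h2 := hadj (fun h => hne h.symm)
    simp only [Finset.mem_singleton]
    apply Fin.ext
    rcases eq_or_ne ((v.val + n / 2) % n) x.val with h3 | h3
    · exact h3.symm
    · have h2 := h2 h3
      refine Eq.symm ?_
      show (v.val + n / 2) % n = x.val
      calc (v.val + n / 2) % n = ((x.val + n / 2) % n + n / 2) % n := by rw [h2]
        _ = (x.val + (n / 2 + n / 2)) % n := by rw [Nat.mod_add_mod, Nat.add_assoc]
        _ = x.val := by rw [hh, Nat.add_mod_right, Nat.mod_eq_of_lt x.isLt]
  · subst ht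
    haveI : NeZero n := ⟨by omega⟩
    unfold Rnt
    rw [if_neg (by norm_num), Rn3]
    have h1n : ((1 : Fin n) : ℕ) = 1 := by rw [Fin.val_one', Nat.mod_eq_of_lt (by omega)]
    refine le_trans (Finset.card_le_card (t := {v - 1, v + 1}) ?_)
      ((Finset.card_insert_le _ _).trans (by simp))
    intro x hx
    simp only [Finset.mem_filter, Finset.mem_univ, true_and, compl_adj, not_and, not_not] at hx
    obtain ⟨hne, hadj⟩ := hx
    have hc := hadj (fun h => hne h.symm)
    rw [cycleGraph_adj'] at hc
    simp only [Finset.mem_insert, Finset.mem_singleton]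
    rcases hc with h1 | h1
    · left
      have hv : v - x = 1 := Fin.ext (by rw [h1, h1n])
      rw [← hv, sub_sub_cancel]
    · right
      have hv : x - v = 1 := Fin.ext (by rw [h1, h1n])
      rw [sub_eq_iff_eq_add.mp hv, add_comm]

lemma rnt_exists_walk (hn : 5 ≤ n) (ht : t = 2 ∨ t = 3) (hpar : t = 2 → Even n) (u v : Fin n) :
    ∃ p : (Rnt n t).Walk u v, p.length ≤ 2 := by
  classical
  by_cases huv : u = v
  · subst huv; exact ⟨Walk.nil, by simp⟩
  by_cases hadj : (Rnt n t).Adj u v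
  · exact ⟨Walk.cons hadj Walk.nil, by simp⟩
  set A := Finset.univ.filter (fun x => x ≠ u ∧ ¬ (Rnt n t).Adj u x) with hA
  set B := Finset.univ.filter (fun x => x ≠ v ∧ ¬ (Rnt n t).Adj v x) with hB
  have hAc : A.card ≤ t - 1 := rnt_nonnbr_card hn ht hpar u
  have hBc : B.card ≤ t - 1 := rnt_nonnbr_card hn ht hpar v
  have huB : u ∈ B := by
    simp only [hB, Finset.mem_filter, Finset.mem_univ, true_and]
    exact ⟨huv, fun h => hadj h.symm⟩
  have hvA : v ∈ A := by
    simp only [hA, Finset.mem_filter, Finset.mem_univ, true_and]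
    exact ⟨fun h => huv h.symm, hadj⟩
  have hcard : ((A ∪ B)ᶜ : Finset (Fin n)).Nonempty := by
    rw [← Finset.card_pos, Finset.card_compl]
    have h1 : (A ∪ B).card ≤ A.card + B.card := Finset.card_union_le _ _
    have h2 : t - 1 ≤ 2 := by omega
    simp only [Fintype.card_fin]
    omega
  obtain ⟨x, hx⟩ := hcard
  rw [Finset.mem_compl, Finset.mem_union, not_or] at hx
  obtain ⟨hxA, hxB⟩ := hx
  simp only [hA, hB, Finset.mem_filter, Finset.mem_univ, true_and, not_and, not_not] at hxA hxB
  have hxu : x ≠ u := by rintro rfl; exact hadj ((hxB huv).symm)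
  have hxv : x ≠ v := by rintro rfl; exact hadj (hxA (fun h => huv h.symm))
  exact ⟨Walk.cons (hxA hxu) (Walk.cons (hxB hxv).symm Walk.nil), by simp⟩


section DTC

variable {k : ℕ} {G : SimpleGraph V} {c : V → Fin k}
variable (hd2 : ∀ u v : V, G.dist u v ≤ 2) (hre : ∀ u v : V, G.Reachable u v)

include hd2 in
lemma dtc_le_two (v : V) (i : Fin k) : distToColor G c v i ≤ 2 := by
  by_cases hy : ∃ y, c y = i
  · obtain ⟨y, hy⟩ := hy
    refine le_trans (Nat.sInf_le ?_) (hd2 v y)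
    exact ⟨y, hy, rfl⟩
  · have hS : {m | ∃ y, c y = i ∧ G.dist v y = m} = ∅ := by
      ext m; simp only [Set.mem_setOf_eq, Set.mem_empty_iff_false, iff_false]
      rintro ⟨y, hcy, -⟩; exact hy ⟨y, hcy⟩
    rw [distToColor, hS, Nat.sInf_empty]; omega

include hre in
lemma dtc_zero_iff (v : V) (i : Fin k) :
    distToColor G c v i = 0 ↔ (c v = i ∨ ∀ y, c y ≠ i) := by
  rw [distToColor, Nat.sInf_eq_zero]
  constructor
  · rintro (⟨y, hcy, hdy⟩ | hS)
    · left
      have : v = y := (hre v y).dist_eq_zero_iff.mp hdy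
      rw [this]; exact hcy
    · right
      intro y hy
      have : G.dist v y ∈ ({m | ∃ y, c y = i ∧ G.dist v y = m} : Set ℕ) := ⟨y, hy, rfl⟩
      rw [hS] at this; exact this
  · rintro (hv | hS)
    · exact Or.inl (show ∃ y, c y = i ∧ G.dist v y = 0 from ⟨v, hv, by simp⟩)
    · right
      ext m; simp only [Set.mem_setOf_eq, Set.mem_empty_iff_false, iff_false]
      rintro ⟨y, hcy, -⟩; exact hS y hcy

lemma dtc_two (v : V) (i : Fin k) (h : distToColor G c v i = 2) :
    ∃ y, c y = i ∧ G.dist v y = 2 := by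
  have hne : {m | ∃ y, c y = i ∧ G.dist v y = m}.Nonempty := by
    by_contra hS
    rw [Set.not_nonempty_iff_eq_empty] at hS
    rw [distToColor, hS, Nat.sInf_empty] at h; omega
  have := Nat.sInf_mem hne
  rwa [← distToColor, h] at this

end DTC


end LocatingRainbow
open LocatingRainbow in
theorem color_class_card_le {n t r : ℕ} (hn : 5 ≤ n) (ht : t = 2 ∨ t = 3)
    (hpar : t = 2 → Even n) (hr : 3 ≤ r) (c : Fin n → Fin r)
    (hc : IsLocatingRainbowColoring (Rnt n t) c) (w : Fin r) :
    {v : Fin n | c v = w}.ncard ≤ 1 + ∑ k ∈ Finset.Icc 1 (t - 1), (r - 1).choose (t - k) := by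
  classical
  set G := Rnt n t with hG
  have hwalk := rnt_exists_walk hn ht hpar
  have hd2 : ∀ u v : Fin n, G.dist u v ≤ 2 := fun u v => by
    obtain ⟨p, hp⟩ := hwalk u v; exact (SimpleGraph.dist_le p).trans hp
  have hre : ∀ u v : Fin n, G.Reachable u v := fun u v => ⟨(hwalk u v).choose⟩
  set f : Fin n → Finset (Fin r) :=
    fun v => Finset.univ.filter (fun i => distToColor G c v i = 2) with hf
  have hwnot : ∀ v, c v = w → w ∉ f v := by
    intro v hv hw
    simp only [hf, Finset.mem_filter, Finset.mem_univ, true_and] at hw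
    have := (dtc_zero_iff hre v w).mpr (Or.inl hv)
    omega
  have hcardf : ∀ v, (f v).card ≤ t - 1 := by
    intro v
    refine le_trans (Finset.card_le_card_of_injOn
      (fun i => if h : ∃ y, c y = i ∧ G.dist v y = 2 then h.choose else v) ?_ ?_)
      (rnt_nonnbr_card hn ht hpar v)
    · intro i hi
      simp only [hf, Finset.mem_coe, Finset.mem_filter, Finset.mem_univ, true_and] at hi
      have hex := dtc_two v i hi
      simp only [dif_pos hex, Finset.mem_coe, Finset.mem_filter, Finset.mem_univ, true_and]
      obtain ⟨hcy, hdy⟩ := hex.choose_spec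
      constructor
      · intro h
        rw [h, SimpleGraph.dist_self] at hdy
        omega
      · intro hadj
        have := SimpleGraph.dist_le (SimpleGraph.Walk.cons hadj SimpleGraph.Walk.nil)
        simp only [SimpleGraph.Walk.length_cons, SimpleGraph.Walk.length_nil] at this
        rw [← hG] at this
        omega
    · intro i hi j hj hij
      simp only [hf, Finset.coe_filter, Set.mem_setOf_eq, Finset.mem_univ, true_and] at hi hj
      have hexi := dtc_two v i hi
      have hexj := dtc_two v j hj
      simp only [dif_pos hexi, dif_pos hexj] at hij
      rw [← hexi.choose_spec.1, ← hexj.choose_spec.1, hij]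
  have hinj : ∀ v v', c v = w → c v' = w → f v = f v' → v = v' := by
    intro v v' hv hv' hff
    apply hc.2
    funext i
    show distToColor G c v i = distToColor G c v' i
    have h1 := dtc_le_two hd2 (c := c) v i
    have h2 := dtc_le_two hd2 (c := c) v' i
    have h3 : distToColor G c v i = 0 ↔ distToColor G c v' i = 0 := by
      rw [dtc_zero_iff hre, dtc_zero_iff hre, hv, hv']
    have h4 : distToColor G c v i = 2 ↔ distToColor G c v' i = 2 := by
      have := Finset.ext_iff.mp hff i
      simpa [hf] using this
    omega
  have hset : {v : Fin n | c v = w}.ncard = (Finset.univ.filter (fun v => c v = w)).card := by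
    rw [Set.ncard_eq_toFinset_card']
    congr 1
    ext v; simp
  rw [hset]
  set T := (Finset.range t).biUnion (fun k => (Finset.univ.erase w).powersetCard k) with hT
  have hmaps : ∀ v ∈ Finset.univ.filter (fun v => c v = w), f v ∈ T := by
    intro v hv
    simp only [Finset.mem_filter, Finset.mem_univ, true_and] at hv
    rw [hT, Finset.mem_biUnion]
    have ht2 : 2 ≤ t := by omega
    refine ⟨(f v).card, Finset.mem_range.mpr (by have := hcardf v; omega), ?_⟩
    rw [Finset.mem_powersetCard]
    exact ⟨fun i hi => Finset.mem_erase.mpr ⟨fun h => hwnot v hv (h ▸ hi), Finset.mem_univ i⟩, rfl⟩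
  have hTle : T.card ≤ ∑ k ∈ Finset.range t, (r - 1).choose k := by
    refine le_trans Finset.card_biUnion_le (Finset.sum_le_sum fun k _ => ?_)
    rw [Finset.card_powersetCard, Finset.card_erase_of_mem (Finset.mem_univ w),
      Finset.card_univ, Fintype.card_fin]
  refine le_trans (Finset.card_le_card_of_injOn f hmaps ?_) (hTle.trans ?_)
  · intro v hv v' hv' hff
    simp only [Finset.coe_filter, Set.mem_setOf_eq, Finset.mem_univ, true_and] at hv hv'
    exact hinj v v' hv hv' hff
  · rcases ht with ht | ht <;> subst ht
    · simp [Finset.sum_range_succ, Finset.Icc_self]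
    · rw [show Finset.Icc 1 (3 - 1) = {1, 2} from rfl]
      simp [Finset.sum_range_succ, Finset.sum_insert]
      omega
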